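/- Let H be a complex Hilbert space with a unitary 𝔎 satisfying 𝔎³ = Id and let ℱ : H × H → ℂ² be a sesquilinear form satisfying ℱ(𝔎Ψ, 𝔎Φ) = R ℱ(Ψ, Φ), where R is the 2π/3-rotation matrix with eigenvalues τ, τ̄ and eigenvectors (1, i)ᵀ, (1, -i)ᵀ. If Ψⱼ ∈ H_j and Ψₖ ∈ H_k for j, k ∈ {1, τ, τ̄}, then: ℱ(Ψⱼ, Ψₖ) = 0 when j = k; ℱ(Ψⱼ, Ψₖ) is a scalar multiple of (1, i)ᵀ when (j,k) ∈ {(1,τ), (τ,τ̄), (τ̄,1)}; and ℱ(Ψⱼ, Ψₖ) is a scalar multiple of (1, -i)ᵀ when (j,k) ∈ {(τ,1), (τ̄,τ), (1,τ̄)}. -/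
import Mathlib


open Matrix

/-- The clockwise `2π/3`-rotation matrix over `ℂ`. -/
noncomputable def Rc : Matrix (Fin 2) (Fin 2) ℂ :=
  !![-1/2, ((Real.sqrt 3 : ℝ) : ℂ)/2; -((Real.sqrt 3 : ℝ) : ℂ)/2, -1/2]

/-- `τ = e^{2πi/3}`. -/
noncomputable def τ : ℂ := Complex.exp (2 * Real.pi * Complex.I / 3)

/-- `τ̄ = e^{-2πi/3}`. -/
noncomputable def τb : ℂ := (starRingEnd ℂ) τ


lemma tau_eq : τ = -1/2 + (((Real.sqrt 3 : ℝ) : ℂ)/2) * Complex.I := by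
  have h : (2 * Real.pi * Complex.I / 3) = ((2 * Real.pi / 3 : ℝ) : ℂ) * Complex.I := by
    push_cast; ring
  rw [τ, h, Complex.exp_mul_I, ← Complex.ofReal_cos, ← Complex.ofReal_sin]
  have hc : Real.cos (2 * Real.pi / 3) = -1/2 := by
    have : (2 * Real.pi / 3) = Real.pi - Real.pi / 3 := by ring
    rw [this, Real.cos_pi_sub, Real.cos_pi_div_three]; norm_num
  have hsn : Real.sin (2 * Real.pi / 3) = Real.sqrt 3 / 2 := by
    have : (2 * Real.pi / 3) = Real.pi - Real.pi / 3 := by ring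
    rw [this, Real.sin_pi_sub, Real.sin_pi_div_three]
  rw [hc, hsn]; push_cast; ring

lemma taub_eq : τb = -1/2 - (((Real.sqrt 3 : ℝ) : ℂ)/2) * Complex.I := by
  rw [τb, tau_eq]
  simp [map_add, map_div₀, _root_.map_mul, map_ofNat, Complex.conj_I, Complex.conj_ofReal]
  ring

lemma hs3 : ((Real.sqrt 3 : ℝ) : ℂ)^2 = 3 := by
  rw [sq, ← Complex.ofReal_mul, Real.mul_self_sqrt (by norm_num)]
  norm_num

lemma conj_tau : (starRingEnd ℂ) τ = τb := rfl
lemma conj_taub : (starRingEnd ℂ) τb = τ := by rw [τb, Complex.conj_conj]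
lemma tau_mul_taub : τ * τb = 1 := by
  rw [tau_eq, taub_eq]
  linear_combination (-Complex.I^2/4) * hs3 + (-3/4 : ℂ) * Complex.I_sq
lemma tau_mul_tau : τ * τ = τb := by
  rw [tau_eq, taub_eq]
  linear_combination (Complex.I^2/4) * hs3 + (3/4 : ℂ) * Complex.I_sq
lemma taub_mul_taub : τb * τb = τ := by
  rw [tau_eq, taub_eq]
  linear_combination (Complex.I^2/4) * hs3 + (3/4 : ℂ) * Complex.I_sq

lemma sqrt3_ne : ((Real.sqrt 3 : ℝ) : ℂ) ≠ 0 := by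
  simp [Real.sqrt_eq_zero']

lemma eig_one (v : Fin 2 → ℂ) (h : Rc.mulVec v = (1:ℂ) • v) : v = 0 := by
  have h0 := congrFun h 0
  have h1 := congrFun h 1
  simp [Rc, Matrix.mulVec, dotProduct, Fin.sum_univ_two] at h0 h1
  have hv1 : v 1 = 0 := by
    linear_combination (((Real.sqrt 3 : ℝ) : ℂ)/6) * h0 + (-1/2 : ℂ) * h1 + (-(v 1)/12) * hs3
  have hv0 : v 0 = 0 := by
    linear_combination (-2/3 : ℂ) * h0 + (((Real.sqrt 3 : ℝ) : ℂ)/3) * hv1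
  funext i; fin_cases i <;> simp [hv0, hv1]

lemma eig_tau (v : Fin 2 → ℂ) (h : Rc.mulVec v = τ • v) :
    ∃ c : ℂ, v = c • ![1, Complex.I] := by
  have h0 := congrFun h 0
  simp [Rc, tau_eq, Matrix.mulVec, dotProduct, Fin.sum_univ_two] at h0
  have h2 : ((Real.sqrt 3 : ℝ) : ℂ) * (v 1 - Complex.I * v 0) = 0 := by
    linear_combination 2 * h0
  have hv1 : v 1 = Complex.I * v 0 :=
    sub_eq_zero.mp ((mul_eq_zero.mp h2).resolve_left sqrt3_ne)
  refine ⟨v 0, ?_⟩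
  funext i; fin_cases i <;> simp [hv1] <;> ring

lemma eig_taub (v : Fin 2 → ℂ) (h : Rc.mulVec v = τb • v) :
    ∃ c : ℂ, v = c • ![1, -Complex.I] := by
  have h0 := congrFun h 0
  simp [Rc, taub_eq, Matrix.mulVec, dotProduct, Fin.sum_univ_two] at h0
  have h2 : ((Real.sqrt 3 : ℝ) : ℂ) * (v 1 - (-Complex.I) * v 0) = 0 := by
    linear_combination 2 * h0
  have hv1 : v 1 = -Complex.I * v 0 :=
    sub_eq_zero.mp ((mul_eq_zero.mp h2).resolve_left sqrt3_ne)
  refine ⟨v 0, ?_⟩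
  funext i; fin_cases i <;> simp [hv1] <;> ring

/-- For a sesquilinear `ℂ²`-valued form `ℱ` equivariant under a cube-root-of-identity
unitary `𝔎` via the rotation `R`, the value `ℱ(Ψⱼ, Ψₖ)` on eigenvectors vanishes when
`j = k`, is a multiple of `(1, i)ᵀ` for `(j,k) ∈ {(1,τ), (τ,τ̄), (τ̄,1)}`, and a multiple
of `(1, -i)ᵀ` for `(j,k) ∈ {(τ,1), (τ̄,τ), (1,τ̄)}`. -/
theorem sesquilinear_form_directions
    {H : Type*} [NormedAddCommGroup H] [InnerProductSpace ℂ H]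
    (U : H →ₗᵢ[ℂ] H) (hU3 : ∀ x, U (U (U x)) = x)
    (F : H → H → Fin 2 → ℂ)
    (hFsmul₁ : ∀ (a : ℂ) (Ψ Φ : H), F (a • Ψ) Φ = (starRingEnd ℂ) a • F Ψ Φ)
    (hFsmul₂ : ∀ (a : ℂ) (Ψ Φ : H), F Ψ (a • Φ) = a • F Ψ Φ)
    (hFadd₁ : ∀ (Ψ Ψ' Φ : H), F (Ψ + Ψ') Φ = F Ψ Φ + F Ψ' Φ)
    (hFadd₂ : ∀ (Ψ Φ Φ' : H), F Ψ (Φ + Φ') = F Ψ Φ + F Ψ Φ')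
    (hFU : ∀ Ψ Φ : H, F (U Ψ) (U Φ) = Rc.mulVec (F Ψ Φ))
    (j k : ℂ) (hj : j ∈ ({1, τ, τb} : Set ℂ)) (hk : k ∈ ({1, τ, τb} : Set ℂ))
    (Ψj Ψk : H) (hΨj : U Ψj = j • Ψj) (hΨk : U Ψk = k • Ψk) :
    (j = k → F Ψj Ψk = 0) ∧
    (((j, k) = (1, τ) ∨ (j, k) = (τ, τb) ∨ (j, k) = (τb, 1)) →
      ∃ c : ℂ, F Ψj Ψk = c • ![1, Complex.I]) ∧
    (((j, k) = (τ, 1) ∨ (j, k) = (τb, τ) ∨ (j, k) = (1, τb)) →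
      ∃ c : ℂ, F Ψj Ψk = c • ![1, -Complex.I]) := by
  have hkey : Rc.mulVec (F Ψj Ψk) = ((starRingEnd ℂ) j * k) • F Ψj Ψk := by
    have h := hFU Ψj Ψk
    rw [hΨj, hΨk, hFsmul₁, hFsmul₂, smul_smul] at h
    rw [← h]
  refine ⟨?_, ?_, ?_⟩
  · rintro rfl
    have hone : (starRingEnd ℂ) j * j = 1 := by
      rcases hj with rfl | rfl | rfl
      · simp
      · rw [conj_tau, mul_comm]; exact tau_mul_taub
      · rw [conj_taub]; exact tau_mul_taub
    rw [hone] at hkey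
    exact eig_one _ hkey
  · rintro (h | h | h) <;> rw [Prod.mk.injEq] at h <;> obtain ⟨rfl, rfl⟩ := h
    · have : (starRingEnd ℂ) 1 * τ = τ := by simp
      rw [this] at hkey; exact eig_tau _ hkey
    · rw [conj_tau, taub_mul_taub] at hkey; exact eig_tau _ hkey
    · rw [conj_taub, mul_one] at hkey; exact eig_tau _ hkey
  · rintro (h | h | h) <;> rw [Prod.mk.injEq] at h <;> obtain ⟨rfl, rfl⟩ := h
    · have : (starRingEnd ℂ) τ * 1 = τb := by rw [conj_tau, mul_one]
      rw [this] at hkey; exact eig_taub _ hkey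
    · rw [conj_taub, tau_mul_tau] at hkey; exact eig_taub _ hkey
    · have : (starRingEnd ℂ) 1 * τb = τb := by simp
      rw [this] at hkey; exact eig_taub _ hkey
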